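/- Let k ≥ 1, n = 4k+4, m = 2k+1, and let 1 ≥ λ₂ ≥ ... ≥ λₙ ≥ −1 be real numbers with 1 + λ₂ + ... + λₙ ≥ 0. Let α₁ < α₂ < ... < α_m be the increasing enumeration of {3} ∪ {j : 6 ≤ j ≤ n−1, j ≡ 2 or 3 (mod 4)} (namely 3, 6, 7, 10, 11, ..., n−2, n−1), and let β₁ < ... < β_m be the increasing enumeration of {j : 4 ≤ j ≤ n−3, j ≡ 0 or 1 (mod 4)} ∪ {n} (namely 4, 5, 8, 9, ..., n−4, n−3, n). If both 1/n + ((n−m−1)/(n(m+1)))·λ₂ + Σ_{j=1}^{m} λ_{α_j}/((m−j+1)(m−j+2)) ≥ 0 and 1/n + ((n−m−1)/(n(m+1)))·λ₂ + Σ_{j=1}^{m} λ_{β_j}/((m−j+1)(m−j+2)) ≥ 0 hold, then there exists an n×n symmetric doubly stochastic matrix whose eigenvalues, counted with algebraic multiplicity, are 1, λ₂, ..., λₙ. -/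

import Mathlib

open Matrix Polynomial

open Finset

namespace SDIEP

/-- unnormalized Helmert vector with spike at position `q` -/
noncomputable def vv (q a : ℕ) : ℝ := if a < q then 1 else if a = q then -(q:ℝ) else 0

noncomputable def Pf (p i t : ℕ) : ℝ :=
  if t = 0 then 1
  else if t = 1 then (if i < p then 1 else -1)
  else if i / p = t % 2 then vv (t / 2) (i % p) else 0

noncomputable def Rf (p t i : ℕ) : ℝ :=
  if t = 0 then 1 / (2*p : ℕ)
  else if t = 1 then (if i < p then 1 else -1) / (2*p : ℕ)
  else (if i / p = t % 2 then vv (t / 2) (i % p) else 0) / (((t/2) * (t/2+1) : ℕ) : ℝ)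

lemma Pf0 (p i : ℕ) : Pf p i 0 = 1 := by unfold Pf; rw [if_pos rfl]
lemma Pf1 (p i : ℕ) : Pf p i 1 = (if i < p then (1:ℝ) else -1) := by
  unfold Pf; rw [if_neg (by omega), if_pos rfl]
lemma Pf_big {t : ℕ} (h2 : 2 ≤ t) (p i : ℕ) :
    Pf p i t = (if i / p = t % 2 then vv (t / 2) (i % p) else 0) := by
  unfold Pf; rw [if_neg (by omega), if_neg (by omega)]
lemma Rf0 (p i : ℕ) : Rf p 0 i = 1 / ((2*p : ℕ) : ℝ) := by unfold Rf; rw [if_pos rfl]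
lemma Rf1 (p i : ℕ) : Rf p 1 i = (if i < p then (1:ℝ) else -1) / ((2*p : ℕ) : ℝ) := by
  unfold Rf; rw [if_neg (by omega), if_pos rfl]
lemma Rf_big {t : ℕ} (h2 : 2 ≤ t) (p i : ℕ) :
    Rf p t i = (if i / p = t % 2 then vv (t / 2) (i % p) else 0) / (((t/2) * (t/2+1) : ℕ) : ℝ) := by
  unfold Rf; rw [if_neg (by omega), if_neg (by omega)]

lemma pairSum {M : Type*} [AddCommMonoid M] (f : ℕ → M) (s : ℕ) :
    ∑ t ∈ range (2*s), f t = ∑ q ∈ range s, (f (2*q) + f (2*q+1)) := by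
  induction s with
  | zero => simp
  | succ s ih =>
      have h : 2*(s+1) = (2*s + 1) + 1 := by ring
      rw [h, Finset.sum_range_succ, Finset.sum_range_succ, ih, Finset.sum_range_succ]
      rw [add_assoc]

lemma pairProd {M : Type*} [CommMonoid M] (f : ℕ → M) (s : ℕ) :
    ∏ t ∈ range (2*s), f t = ∏ q ∈ range s, (f (2*q) * f (2*q+1)) := by
  induction s with
  | zero => simp
  | succ s ih =>
      have h : 2*(s+1) = (2*s + 1) + 1 := by ring
      rw [h, Finset.prod_range_succ, Finset.prod_range_succ, ih, Finset.prod_range_succ]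
      rw [mul_assoc]

lemma rangeIcc {M : Type*} [AddCommMonoid M] (g : ℕ → M) (s : ℕ) :
    ∑ i ∈ range s, g (i+1) = ∑ q ∈ Icc 1 s, g q := by
  induction s with
  | zero => simp
  | succ s ih => rw [Finset.sum_range_succ, ih, Finset.sum_Icc_succ_top (by omega)]

lemma rangeIccProd {M : Type*} [CommMonoid M] (g : ℕ → M) (s : ℕ) :
    ∏ i ∈ range s, g (i+1) = ∏ q ∈ Icc 1 s, g q := by
  induction s with
  | zero => simp
  | succ s ih => rw [Finset.prod_range_succ, ih, Finset.prod_Icc_succ_top (by omega)]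

lemma IccSplit {M : Type*} [AddCommMonoid M] (f : ℕ → M) {b m : ℕ} (h : b ≤ m) :
    ∑ q ∈ Icc 1 m, f q = ∑ q ∈ Icc 1 b, f q + ∑ q ∈ Icc (b+1) m, f q := by
  rw [show Icc 1 m = Ioc 0 m from (Finset.Icc_add_one_left_eq_Ioc 0 m),
      show Icc 1 b = Ioc 0 b from (Finset.Icc_add_one_left_eq_Ioc 0 b),
      show Icc (b+1) m = Ioc b m from (Finset.Icc_add_one_left_eq_Ioc b m)]
  exact (Finset.sum_Ioc_consecutive f (Nat.zero_le b) h).symm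

lemma reflectSum {M : Type*} [AddCommMonoid M] (g : ℕ → M) (s : ℕ) :
    ∑ j ∈ Icc 1 s, g j = ∑ j ∈ Icc 1 s, g (s+1-j) := by
  refine Finset.sum_nbij' (fun j => s+1-j) (fun j => s+1-j) ?_ ?_ ?_ ?_ ?_ <;>
    simp only [Finset.mem_Icc] <;> intros <;> first | omega | (congr 1; omega)

lemma reflectProd {M : Type*} [CommMonoid M] (g : ℕ → M) (s : ℕ) :
    ∏ j ∈ Icc 1 s, g j = ∏ j ∈ Icc 1 s, g (s+1-j) := by
  refine Finset.prod_nbij' (fun j => s+1-j) (fun j => s+1-j) ?_ ?_ ?_ ?_ ?_ <;>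
    simp only [Finset.mem_Icc] <;> intros <;> first | omega | (congr 1; omega)

lemma prodPairIcc {M : Type*} [CommMonoid M] (g : ℕ → M) (s : ℕ) :
    ∏ j ∈ Icc 1 s, (g (2*j+1) * g (2*j+2)) = ∏ t ∈ Icc 3 (2*s+2), g t := by
  rw [show Icc 3 (2*s+2) = Ico 3 (2*s+3) from (Finset.Ico_add_one_right_eq_Icc 3 (2*s+2)).symm,
      Finset.prod_Ico_eq_prod_range]
  rw [show 2*s+3-3 = 2*s by omega, pairProd]
  rw [← rangeIccProd (fun j => g (2*j+1) * g (2*j+2)) s]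
  apply Finset.prod_congr rfl
  intro q _
  congr 1 <;> congr 1 <;> omega

lemma tele (b : ℕ) : ∑ q ∈ Icc 1 b, (1:ℝ)/((q*(q+1) : ℕ) : ℝ) = b/(b+1) := by
  induction b with
  | zero => simp
  | succ b ih =>
      rw [Finset.sum_Icc_succ_top (by omega), ih]
      have h1 : ((b:ℝ)+1) ≠ 0 := by positivity
      have h2 : ((b:ℝ)+2) ≠ 0 := by positivity
      push_cast
      field_simp
      ring

lemma eval (m : ℕ) (w : ℕ → ℝ) (a b : ℕ) (hab : a ≤ b) (hb : b ≤ m) :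
    ∑ q ∈ Icc 1 m, w q * (vv q a * vv q b) / ((q*(q+1) : ℕ) : ℝ)
    = ∑ q ∈ Icc (b+1) m, w q / ((q*(q+1) : ℕ) : ℝ)
      + (if a = b then w b * b/((b:ℝ)+1) else - (w b / ((b:ℝ)+1))) := by
  rw [IccSplit _ hb]
  have h2 : ∑ q ∈ Icc (b+1) m, w q * (vv q a * vv q b) / ((q*(q+1) : ℕ) : ℝ)
      = ∑ q ∈ Icc (b+1) m, w q / ((q*(q+1) : ℕ) : ℝ) := by
    apply Finset.sum_congr rfl
    intro q hq
    simp only [Finset.mem_Icc] at hq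
    have ha : a < q := by omega
    have hbq : b < q := by omega
    simp [vv, ha, hbq]
  rw [h2]
  have h1 : ∑ q ∈ Icc 1 b, w q * (vv q a * vv q b) / ((q*(q+1) : ℕ) : ℝ)
      = (if a = b then w b * b/((b:ℝ)+1) else - (w b / ((b:ℝ)+1))) := by
    rcases Nat.eq_zero_or_pos b with hb0 | hbpos
    · subst hb0
      have ha0 : a = 0 := by omega
      simp [ha0, vv]
    · rw [Finset.sum_eq_single_of_mem b (by simp [Finset.mem_Icc]; omega)]
      · have hvb : vv b b = -(b:ℝ) := by simp [vv]
        have hcast : ((b*(b+1) : ℕ) : ℝ) = (b:ℝ) * ((b:ℝ)+1) := by push_cast; ring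
        have hbne : (b:ℝ) ≠ 0 := Nat.cast_ne_zero.mpr (by omega)
        rcases eq_or_lt_of_le hab with he | hlt
        · subst he
          rw [if_pos rfl]
          simp only [hvb, hcast]
          field_simp
        · have hva : vv b a = 1 := by simp [vv, hlt]
          rw [if_neg (by omega)]
          rw [hva, hvb, hcast]
          field_simp
      · intro q hq hqb
        simp only [Finset.mem_Icc] at hq
        have h3 : ¬ b < q := by omega
        have h4 : b ≠ q := by omega
        simp [vv, h3, h4]
  rw [h1, add_comm]


lemma teleSuffix {b m : ℕ} (h : b ≤ m) :
    ∑ q ∈ Icc (b+1) m, (1:ℝ)/((q*(q+1) : ℕ) : ℝ) = 1/((b:ℝ)+1) - 1/((m:ℝ)+1) := by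
  have hs := IccSplit (fun q => (1:ℝ)/((q*(q+1) : ℕ) : ℝ)) h
  rw [tele, tele] at hs
  have h1 : ((b:ℝ)+1) ≠ 0 := by positivity
  have h2 : ((m:ℝ)+1) ≠ 0 := by positivity
  have : ∑ q ∈ Icc (b+1) m, (1:ℝ)/((q*(q+1) : ℕ) : ℝ) = (m:ℝ)/((m:ℝ)+1) - (b:ℝ)/((b:ℝ)+1) := by
    linarith [hs]
  rw [this]
  field_simp
  ring

lemma posden (q : ℕ) (hq : 1 ≤ q) : (0:ℝ) < ((q*(q+1) : ℕ) : ℝ) := by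
  have : 0 < q*(q+1) := by positivity
  exact_mod_cast this

lemma helper (m : ℕ) (l2 : ℝ) (w : ℕ → ℝ)
    (hmono : ∀ q q', 1 ≤ q → q ≤ q' → q' ≤ m → w q ≤ w q')
    (hwl : ∀ q, 1 ≤ q → q ≤ m → w q ≤ l2) (hl2 : l2 ≤ 1)
    (hcond : 0 ≤ (1 + l2)/(2*((m:ℝ)+1)) + ∑ q ∈ Icc 1 m, w q / ((q*(q+1) : ℕ) : ℝ))
    (a b : ℕ) (hab : a ≤ b) (hb : b ≤ m) :
    0 ≤ (1 + l2)/(2*((m:ℝ)+1)) + ∑ q ∈ Icc 1 m, w q * (vv q a * vv q b) / ((q*(q+1) : ℕ) : ℝ) := by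
  rw [eval m w a b hab hb]
  rcases eq_or_lt_of_le hab with he | hlt
  · -- diagonal case: value ≥ hcond value
    subst he
    rw [if_pos rfl]
    have hsplit := IccSplit (fun q => w q / ((q*(q+1) : ℕ) : ℝ)) hb
    have hle : ∑ q ∈ Icc 1 a, w q / ((q*(q+1) : ℕ) : ℝ) ≤ w a * (a:ℝ)/((a:ℝ)+1) := by
      have : ∑ q ∈ Icc 1 a, w q / ((q*(q+1) : ℕ) : ℝ)
          ≤ ∑ q ∈ Icc 1 a, w a * (1/((q*(q+1) : ℕ) : ℝ)) := by
        apply Finset.sum_le_sum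
        intro q hq
        simp only [Finset.mem_Icc] at hq
        rw [mul_one_div]
        gcongr
        exact hmono q a hq.1 hq.2 hb
      calc ∑ q ∈ Icc 1 a, w q / ((q*(q+1) : ℕ) : ℝ)
          ≤ ∑ q ∈ Icc 1 a, w a * (1/((q*(q+1) : ℕ) : ℝ)) := this
        _ = w a * ∑ q ∈ Icc 1 a, (1:ℝ)/((q*(q+1) : ℕ) : ℝ) := by rw [Finset.mul_sum]
        _ = w a * ((a:ℝ)/((a:ℝ)+1)) := by rw [tele]
        _ = w a * (a:ℝ)/((a:ℝ)+1) := by ring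
    linarith [hcond, hsplit, hle]
  · -- off-diagonal case
    rw [if_neg (by omega)]
    have hb1 : 1 ≤ b := by omega
    have hge : w b * (1/((b:ℝ)+1) - 1/((m:ℝ)+1)) ≤ ∑ q ∈ Icc (b+1) m, w q / ((q*(q+1) : ℕ) : ℝ) := by
      have : ∑ q ∈ Icc (b+1) m, w b * (1/((q*(q+1) : ℕ) : ℝ)) ≤ ∑ q ∈ Icc (b+1) m, w q / ((q*(q+1) : ℕ) : ℝ) := by
        apply Finset.sum_le_sum
        intro q hq
        simp only [Finset.mem_Icc] at hq
        rw [mul_one_div]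
        gcongr
        exact hmono b q hb1 (by omega) hq.2
      calc w b * (1/((b:ℝ)+1) - 1/((m:ℝ)+1))
          = w b * ∑ q ∈ Icc (b+1) m, (1:ℝ)/((q*(q+1) : ℕ) : ℝ) := by rw [teleSuffix hb]
        _ = ∑ q ∈ Icc (b+1) m, w b * (1/((q*(q+1) : ℕ) : ℝ)) := by rw [Finset.mul_sum]
        _ ≤ _ := this
    have hwb1 : w b ≤ 1 := le_trans (hwl b hb1 hb) hl2
    have hwbl : w b ≤ l2 := hwl b hb1 hb
    have hm1 : (0:ℝ) < (m:ℝ)+1 := by positivity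
    have hb1' : (0:ℝ) < (b:ℝ)+1 := by positivity
    have key : 0 ≤ (1 + l2)/(2*((m:ℝ)+1)) - w b/((m:ℝ)+1) := by
      rw [sub_nonneg, div_le_div_iff₀ hm1 (by positivity)]
      nlinarith
    have hexp : w b * (1/((b:ℝ)+1) - 1/((m:ℝ)+1)) = w b/((b:ℝ)+1) - w b/((m:ℝ)+1) := by ring
    linarith [hge, key, hexp]


lemma sumvv {p q : ℕ} (hq : q < p) : ∑ a ∈ range p, vv q a = 0 := by
  rw [Finset.range_eq_Ico, ← Finset.sum_Ico_consecutive _ (Nat.zero_le (q+1)) (show q+1 ≤ p by omega)]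
  have h2 : ∑ a ∈ Ico (q+1) p, vv q a = 0 := by
    apply Finset.sum_eq_zero
    intro a ha
    simp only [Finset.mem_Ico] at ha
    have h3 : ¬ a < q := by omega
    have h4 : a ≠ q := by omega
    simp [vv, h3, h4]
  rw [h2, ← Finset.range_eq_Ico, Finset.sum_range_succ]
  have h5 : ∑ a ∈ range q, vv q a = q := by
    have hone : ∀ a ∈ range q, vv q a = 1 := fun a ha => by
      simp [vv, Finset.mem_range.mp ha]
    rw [Finset.sum_congr rfl hone, Finset.sum_const, Finset.card_range, nsmul_eq_mul, mul_one]
  rw [h5]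
  simp [vv]

lemma halfSplit {M : Type*} [AddCommMonoid M] (f : ℕ → M) (p : ℕ) :
    ∑ i ∈ range (2*p), f i = ∑ i ∈ range p, f i + ∑ i ∈ range p, f (p + i) := by
  rw [Finset.range_eq_Ico, ← Finset.sum_Ico_consecutive _ (Nat.zero_le p) (show p ≤ 2*p by omega)]
  congr 1
  all_goals rw [Finset.sum_Ico_eq_sum_range]
  all_goals simp only [show 2*p - p = p by omega, Nat.sub_zero, zero_add, ← Finset.range_eq_Ico]

lemma rowR (m t : ℕ) (ht : t < 2*(m+1)) :
    ∑ i ∈ range (2*(m+1)), Rf (m+1) t i = if t = 0 then 1 else 0 := by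
  have hcast : ((2*(m+1) : ℕ) : ℝ) ≠ 0 := by positivity
  rcases Nat.eq_zero_or_pos t with ht0 | htpos
  · subst ht0
    rw [if_pos rfl]
    have e0 : ∀ i ∈ range (2*(m+1)), Rf (m+1) 0 i = 1 / ((2*(m+1) : ℕ) : ℝ) :=
      fun i _ => Rf0 (m+1) i
    rw [Finset.sum_congr rfl e0, Finset.sum_const, Finset.card_range, nsmul_eq_mul]
    field_simp
  · rw [if_neg (by omega), halfSplit]
    by_cases ht1 : t = 1
    · subst ht1
      have e1 : ∀ i ∈ range (m+1), Rf (m+1) 1 i = 1 / ((2*(m+1) : ℕ) : ℝ) := by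
        intro i hi
        rw [Rf1, if_pos (Finset.mem_range.mp hi)]
      have e2 : ∀ i ∈ range (m+1), Rf (m+1) 1 (m+1+i) = -(1 / ((2*(m+1) : ℕ) : ℝ)) := by
        intro i hi
        rw [Rf1, if_neg (by omega)]
        ring
      rw [Finset.sum_congr rfl e1, Finset.sum_congr rfl e2]
      simp
    · have ht2 : 2 ≤ t := by omega
      have hq1 : 1 ≤ t/2 := by omega
      have hqm : t/2 ≤ m := by omega
      have key0 : ∀ i, i ∈ range (m+1) → (i : ℕ) / (m+1) = 0 := fun i hi =>
        Nat.div_eq_of_lt (Finset.mem_range.mp hi)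
      have keymod0 : ∀ i, i ∈ range (m+1) → (i : ℕ) % (m+1) = i := fun i hi =>
        Nat.mod_eq_of_lt (Finset.mem_range.mp hi)
      have key1 : ∀ i, i ∈ range (m+1) → (m+1+i) / (m+1) = 1 := by
        intro i hi
        rw [add_comm (m+1) i, Nat.add_div_right i (by omega), key0 i hi]
      have keymod1 : ∀ i, i ∈ range (m+1) → (m+1+i) % (m+1) = i := by
        intro i hi
        rw [Nat.add_mod_left, keymod0 i hi]
      have hvv : ∑ i ∈ range (m+1), vv (t/2) i = 0 := sumvv (by omega)
      have hmod : t % 2 = 0 ∨ t % 2 = 1 := by omega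
      rcases hmod with hm0 | hm1
      · have e1 : ∀ i ∈ range (m+1), Rf (m+1) t i
            = vv (t/2) i / (((t/2) * (t/2+1) : ℕ) : ℝ) := by
          intro i hi
          rw [Rf_big ht2, hm0, if_pos (key0 i hi), keymod0 i hi]
        have e2 : ∀ i ∈ range (m+1), Rf (m+1) t (m+1+i) = 0 := by
          intro i hi
          rw [Rf_big ht2, hm0, if_neg (by rw [key1 i hi]; omega), zero_div]
        rw [Finset.sum_congr rfl e1, Finset.sum_congr rfl e2, ← Finset.sum_div, hvv]
        simp
      · have e1 : ∀ i ∈ range (m+1), Rf (m+1) t i = 0 := by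
          intro i hi
          rw [Rf_big ht2, hm1, if_neg (by rw [key0 i hi]; omega), zero_div]
        have e2 : ∀ i ∈ range (m+1), Rf (m+1) t (m+1+i)
            = vv (t/2) i / (((t/2) * (t/2+1) : ℕ) : ℝ) := by
          intro i hi
          rw [Rf_big ht2, hm1, if_pos (key1 i hi), keymod1 i hi]
        rw [Finset.sum_congr rfl e1, Finset.sum_congr rfl e2, ← Finset.sum_div, hvv]
        simp

lemma master (m : ℕ) (c : ℕ → ℝ) (i i' : ℕ) (hi : i < 2*(m+1)) (hi' : i' < 2*(m+1)) :
    ∑ t ∈ range (2*(m+1)), Pf (m+1) i t * c t * Rf (m+1) t i'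
    = c 0 / ((2*(m+1) : ℕ) : ℝ)
      + (if i < m+1 then (1:ℝ) else -1) * (if i' < m+1 then (1:ℝ) else -1) * c 1 / ((2*(m+1):ℕ):ℝ)
      + (if i / (m+1) = i' / (m+1)
         then ∑ q ∈ Icc 1 m, c (2*q + i/(m+1)) * (vv q (i % (m+1)) * vv q (i' % (m+1))) / ((q*(q+1) : ℕ):ℝ)
         else 0) := by
  rw [pairSum _ (m+1), Finset.sum_range_succ']
  have h0 : Pf (m+1) i (2*0) * c (2*0) * Rf (m+1) (2*0) i'
      + Pf (m+1) i (2*0+1) * c (2*0+1) * Rf (m+1) (2*0+1) i'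
      = c 0 / ((2*(m+1) : ℕ) : ℝ)
        + (if i < m+1 then (1:ℝ) else -1) * (if i' < m+1 then (1:ℝ) else -1) * c 1 / ((2*(m+1):ℕ):ℝ) := by
    rw [Pf0, Pf1, Rf0, Rf1]
    have key : ∀ s s' : ℝ, (1:ℝ) * c 0 * (1/((2*(m+1):ℕ):ℝ)) + s * c 1 * (s'/((2*(m+1):ℕ):ℝ))
        = c 0/((2*(m+1):ℕ):ℝ) + s*s'*c 1/((2*(m+1):ℕ):ℝ) := by intros; ring
    exact key _ _
  rw [h0]
  have hrest : ∑ q ∈ range m, (Pf (m+1) i (2*(q+1)) * c (2*(q+1)) * Rf (m+1) (2*(q+1)) i'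
        + Pf (m+1) i (2*(q+1)+1) * c (2*(q+1)+1) * Rf (m+1) (2*(q+1)+1) i')
      = (if i / (m+1) = i' / (m+1)
         then ∑ q ∈ Icc 1 m, c (2*q + i/(m+1)) * (vv q (i % (m+1)) * vv q (i' % (m+1))) / ((q*(q+1) : ℕ):ℝ)
         else 0) := by
    have hgi : i / (m+1) = 0 ∨ i / (m+1) = 1 := by
      have h2 : i / (m+1) < 2 := Nat.div_lt_of_lt_mul (by omega)
      generalize i / (m+1) = g at h2 ⊢
      omega
    have hgi' : i' / (m+1) = 0 ∨ i' / (m+1) = 1 := by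
      have h2 : i' / (m+1) < 2 := Nat.div_lt_of_lt_mul (by omega)
      generalize i' / (m+1) = g at h2 ⊢
      omega
    have hterm : ∀ q, 1 ≤ q →
        Pf (m+1) i (2*q) * c (2*q) * Rf (m+1) (2*q) i'
        + Pf (m+1) i (2*q+1) * c (2*q+1) * Rf (m+1) (2*q+1) i'
        = (if i / (m+1) = i' / (m+1)
           then c (2*q + i/(m+1)) * (vv q (i % (m+1)) * vv q (i' % (m+1))) / ((q*(q+1) : ℕ):ℝ)
           else 0) := by
      intro q hq
      have e1 : (2*q) % 2 = 0 := by omega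
      have e2 : (2*q) / 2 = q := by omega
      have e3 : (2*q+1) % 2 = 1 := by omega
      have e4 : (2*q+1) / 2 = q := by omega
      have ne1 : 2*q ≠ 0 := by omega
      have ne2 : 2*q ≠ 1 := by omega
      have ne3 : 2*q+1 ≠ 0 := by omega
      have ne4 : 2*q+1 ≠ 1 := by omega
      rw [Pf_big (by omega : 2 ≤ 2*q), Pf_big (by omega : 2 ≤ 2*q+1),
          Rf_big (by omega : 2 ≤ 2*q), Rf_big (by omega : 2 ≤ 2*q+1), e1, e2, e3, e4]
      by_cases hgg : i / (m+1) = i' / (m+1)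
      · rw [if_pos hgg]
        rcases hgi with hg0 | hg1
        · have hg0' : i' / (m+1) = 0 := by omega
          rw [hg0, hg0']
          norm_num
          ring
        · have hg1' : i' / (m+1) = 1 := by omega
          rw [hg1, hg1']
          norm_num
          ring
      · rw [if_neg hgg]
        rcases hgi with hg0 | hg1 <;> rcases hgi' with hg0' | hg1' <;>
          first
          | omega
          | (rw [hg0, hg0']; norm_num)
          | (rw [hg0, hg1']; norm_num)
          | (rw [hg1, hg0']; norm_num)
          | (rw [hg1, hg1']; norm_num)
    rw [Finset.sum_congr rfl (fun q hq => hterm (q+1) (by omega))]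
    by_cases hgg : i / (m+1) = i' / (m+1)
    · simp only [if_pos hgg]
      exact rangeIcc (fun q => c (2*q + i/(m+1)) * (vv q (i % (m+1)) * vv q (i' % (m+1))) / ((q*(q+1) : ℕ):ℝ)) m
    · simp only [if_neg hgg]
      simp
  rw [hrest]
  ring

def evAf (j : ℕ) : ℕ := if j = 1 then 3 else if Odd j then 2*j+1 else 2*j+2
def evBf (j : ℕ) : ℕ := if Odd j then 2*j+2 else 2*j+1

noncomputable def levf (m : ℕ) (L : ℕ → ℝ) (t : ℕ) : ℝ :=
  if t = 0 then 1 else if t = 1 then L 2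
  else (if t % 2 = 0 then L (evAf (m+1 - t/2)) else L (evBf (m+1 - t/2)))

lemma evAf_between {j : ℕ} (hj : 1 ≤ j) : 2*j+1 ≤ evAf j ∧ evAf j ≤ 2*j+2 := by
  unfold evAf; split_ifs <;> omega

lemma evBf_between (j : ℕ) : 2*j+1 ≤ evBf j ∧ evBf j ≤ 2*j+2 := by
  unfold evBf; split_ifs <;> omega

lemma evAf_odd {j : ℕ} (h : Odd j) : evAf j = 2*j+1 := by
  by_cases h1 : j = 1
  · subst h1; norm_num [evAf]
  · rw [evAf, if_neg h1, if_pos h]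

lemma evAf_even {j : ℕ} (h : ¬ Odd j) : evAf j = 2*j+2 := by
  by_cases h1 : j = 1
  · exact absurd (by subst h1; exact ⟨0, by norm_num⟩) h
  · rw [evAf, if_neg h1, if_neg h]

lemma evBf_odd {j : ℕ} (h : Odd j) : evBf j = 2*j+2 := by
  unfold evBf; rw [if_pos h]

lemma evBf_even {j : ℕ} (h : ¬ Odd j) : evBf j = 2*j+1 := by
  unfold evBf; rw [if_neg h]

lemma levf0 (m : ℕ) (L : ℕ → ℝ) : levf m L 0 = 1 := by unfold levf; rw [if_pos rfl]
lemma levf1 (m : ℕ) (L : ℕ → ℝ) : levf m L 1 = L 2 := by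
  unfold levf; rw [if_neg (by omega), if_pos rfl]
lemma levf_even (m : ℕ) (L : ℕ → ℝ) {q : ℕ} (hq : 1 ≤ q) :
    levf m L (2*q) = L (evAf (m+1-q)) := by
  unfold levf
  rw [if_neg (by omega), if_neg (by omega), if_pos (by omega), show (2*q)/2 = q by omega]
lemma levf_odd (m : ℕ) (L : ℕ → ℝ) {q : ℕ} (hq : 1 ≤ q) :
    levf m L (2*q+1) = L (evBf (m+1-q)) := by
  unfold levf
  rw [if_neg (by omega), if_neg (by omega), if_neg (by omega), show (2*q+1)/2 = q by omega]

lemma charpoly_conj {n : Type*} [DecidableEq n] [Fintype n] (P A R : Matrix n n ℝ)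
    (h : P * R = 1) : (P * A * R).charpoly = A.charpoly := by
  have hm : charmatrix (P * A * R) = P.map C * charmatrix A * R.map C := by
    have hch : ∀ B : Matrix n n ℝ, charmatrix B = Matrix.scalar _ X - B.map C := fun _ => rfl
    rw [hch, hch, Matrix.mul_sub, Matrix.sub_mul]
    congr 1
    · have h1 : P.map C * Matrix.scalar n (X:ℝ[X]) = Matrix.scalar n (X:ℝ[X]) * P.map C :=
        (Matrix.scalar_commute _ (fun r => Commute.all _ r) (P.map C)).symm
      rw [h1, mul_assoc, ← Matrix.map_mul, h, Matrix.map_one C (map_zero C) (map_one C), mul_one]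
    · rw [Matrix.map_mul, Matrix.map_mul]
  unfold Matrix.charpoly
  rw [hm, Matrix.det_mul, Matrix.det_mul]
  have hdet : (P.map C).det * (R.map C).det = 1 := by
    rw [← Matrix.det_mul, ← Matrix.map_mul, h, Matrix.map_one C (map_zero C) (map_one C),
      Matrix.det_one]
  calc (P.map C).det * (charmatrix A).det * (R.map C).det
      = (charmatrix A).det * ((P.map C).det * (R.map C).det) := by ring
    _ = (charmatrix A).det := by rw [hdet, mul_one]

lemma charpoly_diag {n : Type*} [DecidableEq n] [Fintype n] (d : n → ℝ) :
    (Matrix.diagonal d).charpoly = ∏ i, (X - C (d i)) := by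
  unfold Matrix.charpoly
  have h : charmatrix (Matrix.diagonal d) = Matrix.diagonal (fun i => (X:ℝ[X]) - C (d i)) := by
    refine Matrix.ext fun i j => ?_
    by_cases hij : i = j
    · subst hij; rw [charmatrix_apply_eq]; simp
    · rw [charmatrix_apply_ne _ _ _ hij]; simp [Matrix.diagonal_apply_ne _ hij]
  rw [h, Matrix.det_diagonal]

def onef : ℕ → ℝ := fun _ => 1
@[simp] lemma onef_apply (t : ℕ) : onef t = 1 := rfl

lemma Gval (m a b : ℕ) (hab : a ≤ b) (hb : b ≤ m) :
    ∑ q ∈ Icc 1 m, (vv q a * vv q b)/((q*(q+1):ℕ):ℝ)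
    = (if a = b then (1:ℝ) else 0) - 1/((m:ℝ)+1) := by
  have heval := eval m (fun _ => 1) a b hab hb
  simp only [one_mul] at heval
  rw [heval, teleSuffix hb]
  by_cases hab2 : a = b
  · rw [if_pos hab2, if_pos hab2]
    have h1 : ((b:ℝ)+1) ≠ 0 := by positivity
    field_simp
    ring
  · rw [if_neg hab2, if_neg hab2]
    ring

end SDIEP

open SDIEP

/-- A real square matrix is doubly stochastic if its entries are nonnegative and all of its
row sums and column sums are equal to `1`. -/
def DoublyStochastic {n : ℕ} (D : Matrix (Fin n) (Fin n) ℝ) : Prop :=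
  (∀ i j, 0 ≤ D i j) ∧ (∀ i, ∑ j, D i j = 1) ∧ (∀ j, ∑ i, D i j = 1)

/-- Case `n = 4k+4`, `m = 2k+1`: with `α₁ = 3` and `α_j = 2j+1` for odd `j > 1`, `2j+2` for
even `j` (the increasing enumeration `3, 6, 7, 10, 11, …, n-2, n-1`), and `β_j = 2j+2` for
`j` odd, `2j+1` for `j` even (the increasing enumeration `4, 5, 8, 9, …, n-4, n-3, n`),
if both `1/n + ((n-m-1)/(n(m+1)))λ₂ + ∑_{j=1}^{m} λ_{α_j}/((m-j+1)(m-j+2)) ≥ 0` and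
`1/n + ((n-m-1)/(n(m+1)))λ₂ + ∑_{j=1}^{m} λ_{β_j}/((m-j+1)(m-j+2)) ≥ 0`, then
`1, λ₂, …, λₙ` is the spectrum of an `n × n` symmetric doubly stochastic matrix. -/
theorem sdiep_4k4 (k n m : ℕ) (hk : 1 ≤ k) (hn : n = 4 * k + 4) (hm : m = 2 * k + 1)
    (L : ℕ → ℝ) (hub : L 2 ≤ 1)
    (hdec : ∀ j, 2 ≤ j → j < n → L (j + 1) ≤ L j)
    (hlb : -1 ≤ L n)
    (htr : 0 ≤ 1 + ∑ j ∈ Finset.Icc 2 n, L j)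
    (hcond1 : 0 ≤ 1 / (n : ℝ) + ((n : ℝ) - (m : ℝ) - 1) / ((n : ℝ) * ((m : ℝ) + 1)) * L 2 +
        ∑ j ∈ Finset.Icc 1 m,
          L (if j = 1 then 3 else if Odd j then 2 * j + 1 else 2 * j + 2) /
            (((m - j + 1) * (m - j + 2) : ℕ) : ℝ))
    (hcond2 : 0 ≤ 1 / (n : ℝ) + ((n : ℝ) - (m : ℝ) - 1) / ((n : ℝ) * ((m : ℝ) + 1)) * L 2 +
        ∑ j ∈ Finset.Icc 1 m, L (if Odd j then 2 * j + 2 else 2 * j + 1) /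
          (((m - j + 1) * (m - j + 2) : ℕ) : ℝ)) :
    ∃ D : Matrix (Fin n) (Fin n) ℝ, D.IsSymm ∧ DoublyStochastic D ∧
      D.charpoly = (X - C 1) * ∏ j ∈ Finset.Icc 2 n, (X - C (L j)) := by
  have hp : n = 2*(m+1) := by omega
  have hm1 : 1 ≤ m := by omega
  set Pm : Matrix (Fin n) (Fin n) ℝ := Matrix.of (fun i t : Fin n => Pf (m+1) i.val t.val) with hPm
  set Rm : Matrix (Fin n) (Fin n) ℝ := Matrix.of (fun t i : Fin n => Rf (m+1) t.val i.val) with hRm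
  set Dg : Matrix (Fin n) (Fin n) ℝ := Matrix.diagonal (fun t : Fin n => levf m L t.val) with hDg
  have hiv : ∀ i : Fin n, (i:ℕ) < 2*(m+1) := fun i => hp ▸ i.isLt
  have modle : ∀ j : ℕ, j % (m+1) ≤ m := fun j => by
    have := Nat.mod_lt j (show 0 < m+1 by omega); omega
  have divcase : ∀ j : ℕ, j < 2*(m+1) →
      (j < m+1 ∧ j/(m+1) = 0) ∨ (¬ j < m+1 ∧ j/(m+1) = 1) := by
    intro j hj
    by_cases hlt : j < m+1
    · exact Or.inl ⟨hlt, Nat.div_eq_of_lt hlt⟩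
    · refine Or.inr ⟨hlt, ?_⟩
      rw [show j = (j - (m+1)) + (m+1) by omega, Nat.add_div_right _ (by omega),
        Nat.div_eq_of_lt (by omega)]
  have hentry : ∀ (c : ℕ → ℝ) (i i' : Fin n),
      (Pm * Matrix.diagonal (fun t : Fin n => c t.val) * Rm) i i'
      = ∑ t ∈ range (2*(m+1)), Pf (m+1) i.val t * c t * Rf (m+1) t i'.val := by
    intro c i i'
    rw [Matrix.mul_apply]
    have h1 : ∀ t : Fin n, (Pm * Matrix.diagonal fun t : Fin n => c t.val) i t * Rm t i'
        = Pf (m+1) i.val t.val * c t.val * Rf (m+1) t.val i'.val := by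
      intro t
      rw [Matrix.mul_diagonal]
      rfl
    rw [Finset.sum_congr rfl (fun t _ => h1 t),
      Fin.sum_univ_eq_sum_range (fun t => Pf (m+1) i.val t * c t * Rf (m+1) t i'.val) n, ← hp]
  -- P * R = 1
  have hPR : Pm * Rm = 1 := by
    have hid : Pm * Matrix.diagonal (fun t : Fin n => onef t.val) * Rm = Pm * Rm := by
      have h1 : Matrix.diagonal (fun t : Fin n => onef t.val) = 1 := Matrix.diagonal_one
      rw [h1, mul_one]
    refine Matrix.ext fun i i' => ?_
    rw [← hid, hentry onef i i', master m onef i.val i'.val (hiv i) (hiv i'), Matrix.one_apply]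
    simp only [onef_apply]
    have hGG : ∀ a b : ℕ, a ≤ m → b ≤ m →
        ∑ q ∈ Icc 1 m, (1:ℝ) * (vv q a * vv q b) / ((q*(q+1) : ℕ):ℝ)
        = (if a = b then (1:ℝ) else 0) - 1/((m:ℝ)+1) := by
      intro a b ha hb
      have e1 : ∑ q ∈ Icc 1 m, (1:ℝ) * (vv q a * vv q b) / ((q*(q+1) : ℕ):ℝ)
          = ∑ q ∈ Icc 1 m, (vv q a * vv q b) / ((q*(q+1) : ℕ):ℝ) :=
        Finset.sum_congr rfl fun q _ => by rw [one_mul]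
      rw [e1]
      rcases le_total a b with h | h
      · exact Gval m a b h hb
      · have e2 : ∑ q ∈ Icc 1 m, (vv q a * vv q b) / ((q*(q+1) : ℕ):ℝ)
            = ∑ q ∈ Icc 1 m, (vv q b * vv q a) / ((q*(q+1) : ℕ):ℝ) :=
          Finset.sum_congr rfl fun q _ => by rw [mul_comm (vv q a)]
        rw [e2, Gval m b a h ha]
        by_cases hab : a = b
        · rw [if_pos hab, if_pos hab.symm]
        · rw [if_neg hab, if_neg (fun hc => hab hc.symm)]
    have hcast : ((2*(m+1) : ℕ) : ℝ) = 2*((m:ℝ)+1) := by push_cast; ring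
    have hMne : ((m:ℝ)+1) ≠ 0 := by positivity
    rcases divcase i.val (hiv i) with ⟨hlt, hg⟩ | ⟨hlt, hg⟩ <;>
      rcases divcase i'.val (hiv i') with ⟨hlt', hg'⟩ | ⟨hlt', hg'⟩
    · -- both in first half
      rw [if_pos (show (i:Fin n).val/(m+1) = (i':Fin n).val/(m+1) by rw [hg, hg']), if_pos hlt, if_pos hlt',
        hGG _ _ (modle i.val) (modle i'.val), hcast]
      have hIFF : (i = i') ↔ (i.val % (m+1) = i'.val % (m+1)) := by
        constructor
        · intro h; rw [h]
        · intro h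
          have h1 := Nat.div_add_mod i.val (m+1)
          have h2 := Nat.div_add_mod i'.val (m+1)
          rw [hg] at h1
          rw [hg'] at h2
          exact Fin.ext (by omega)
      by_cases hab : i.val % (m+1) = i'.val % (m+1)
      · rw [if_pos hab, if_pos (hIFF.mpr hab)]
        field_simp
        ring
      · rw [if_neg hab, if_neg (fun h => hab (hIFF.mp h))]
        field_simp
        ring
    · -- first/second half
      rw [if_neg (show ¬ (i:Fin n).val/(m+1) = (i':Fin n).val/(m+1) by rw [hg, hg']; omega), if_pos hlt, if_neg hlt',
        if_neg (by intro h; rw [h] at hlt; exact hlt' hlt)]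
      ring
    · rw [if_neg (show ¬ (i:Fin n).val/(m+1) = (i':Fin n).val/(m+1) by rw [hg, hg']; omega), if_neg hlt, if_pos hlt',
        if_neg (by intro h; rw [h] at hlt; exact hlt hlt')]
      ring
    · -- both in second half
      rw [if_pos (show (i:Fin n).val/(m+1) = (i':Fin n).val/(m+1) by rw [hg, hg']), if_neg hlt, if_neg hlt',
        hGG _ _ (modle i.val) (modle i'.val), hcast]
      have hIFF : (i = i') ↔ (i.val % (m+1) = i'.val % (m+1)) := by
        constructor
        · intro h; rw [h]
        · intro h
          have h1 := Nat.div_add_mod i.val (m+1)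
          have h2 := Nat.div_add_mod i'.val (m+1)
          rw [hg] at h1
          rw [hg'] at h2
          exact Fin.ext (by omega)
      by_cases hab : i.val % (m+1) = i'.val % (m+1)
      · rw [if_pos hab, if_pos (hIFF.mpr hab)]
        field_simp
        ring
      · rw [if_neg hab, if_neg (fun h => hab (hIFF.mp h))]
        field_simp
        ring
  -- the full entry formula for D
  have hDfull : ∀ i i' : Fin n, (Pm * Dg * Rm) i i' =
      levf m L 0 / ((2*(m+1) : ℕ) : ℝ)
      + (if i.val < m+1 then (1:ℝ) else -1) * (if i'.val < m+1 then (1:ℝ) else -1)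
          * levf m L 1 / ((2*(m+1):ℕ):ℝ)
      + (if i.val / (m+1) = i'.val / (m+1)
         then ∑ q ∈ Icc 1 m, levf m L (2*q + i.val/(m+1))
            * (vv q (i.val % (m+1)) * vv q (i'.val % (m+1))) / ((q*(q+1) : ℕ):ℝ)
         else 0) := by
    intro i i'
    rw [hDg, hentry (levf m L) i i', master m _ _ _ (hiv i) (hiv i')]
  -- symmetry
  have hsymm : (Pm * Dg * Rm).IsSymm := by
    rw [Matrix.IsSymm]
    refine Matrix.ext fun i i' => ?_
    rw [Matrix.transpose_apply, hDfull i' i, hDfull i i']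
    by_cases hgg : i.val / (m+1) = i'.val / (m+1)
    · rw [if_pos hgg, if_pos hgg.symm]
      have hsum : ∑ q ∈ Icc 1 m, levf m L (2*q + i'.val/(m+1))
            * (vv q (i'.val % (m+1)) * vv q (i.val % (m+1))) / ((q*(q+1) : ℕ):ℝ)
          = ∑ q ∈ Icc 1 m, levf m L (2*q + i.val/(m+1))
            * (vv q (i.val % (m+1)) * vv q (i'.val % (m+1))) / ((q*(q+1) : ℕ):ℝ) :=
        Finset.sum_congr rfl fun q _ => by rw [← hgg]; ring
      rw [hsum]
      ring
    · rw [if_neg (show ¬ (i':Fin n).val/(m+1) = (i:Fin n).val/(m+1) from fun h => hgg h.symm),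
        if_neg hgg]
      ring
  -- row sums
  have hrowsum : ∀ i : Fin n, ∑ j, (Pm * Dg * Rm) i j = 1 := by
    intro i
    have hrow : ∀ j : Fin n, (Pm * Dg * Rm) i j
        = (fun jv => ∑ t ∈ range (2*(m+1)), Pf (m+1) i.val t * levf m L t * Rf (m+1) t jv) j.val :=
      fun j => by rw [hDg]; exact hentry (levf m L) i j
    rw [Finset.sum_congr rfl (fun j _ => hrow j),
      Fin.sum_univ_eq_sum_range (fun jv => ∑ t ∈ range (2*(m+1)),
        Pf (m+1) i.val t * levf m L t * Rf (m+1) t jv) n,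
      show Finset.range n = Finset.range (2*(m+1)) from by rw [hp], Finset.sum_comm]
    have hterm : ∀ t ∈ range (2*(m+1)),
        ∑ jv ∈ range (2*(m+1)), Pf (m+1) i.val t * levf m L t * Rf (m+1) t jv
        = if t = 0 then (1:ℝ) else 0 := by
      intro t ht
      rw [← Finset.mul_sum, rowR m t (Finset.mem_range.mp ht)]
      by_cases h0 : t = 0
      · subst h0; rw [if_pos rfl, Pf0, levf0]; ring
      · rw [if_neg h0, mul_zero]
    rw [Finset.sum_congr rfl hterm, Finset.sum_ite_eq' (range (2*(m+1))) 0 (fun _ => (1:ℝ)),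
      if_pos (Finset.mem_range.mpr (by omega))]
  refine ⟨Pm * Dg * Rm, hsymm, ⟨?_, hrowsum, ?_⟩, ?_⟩
  · -- nonnegativity
    have Lanti : ∀ x y : ℕ, 2 ≤ x → x ≤ y → y ≤ n → L y ≤ L x := by
      intro x y hx hxy hyn
      induction y, hxy using Nat.le_induction with
      | base => exact le_refl _
      | succ y hy ih =>
          exact le_trans (hdec y (by omega) (by omega)) (ih (by omega))
    have hnr : (n:ℝ) = 2*((m:ℝ)+1) := by rw [hp]; push_cast; ring
    have hMne : ((m:ℝ)+1) ≠ 0 := by positivity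
    have hcast2 : ((2*(m+1):ℕ):ℝ) = 2*((m:ℝ)+1) := by push_cast; ring
    have hconstEq : 1 / (n : ℝ) + ((n : ℝ) - (m : ℝ) - 1) / ((n : ℝ) * ((m : ℝ) + 1)) * L 2
        = (1 + L 2)/(2*((m:ℝ)+1)) := by
      rw [hnr]; field_simp; ring
    have hcondA : 0 ≤ (1 + L 2)/(2*((m:ℝ)+1))
        + ∑ q ∈ Icc 1 m, L (evAf (m+1-q)) / ((q*(q+1):ℕ):ℝ) := by
      have hstep : ∑ j ∈ Icc 1 m, L (evAf j) / (((m-j+1)*(m-j+2):ℕ):ℝ)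
          = ∑ q ∈ Icc 1 m, L (evAf (m+1-q)) / ((q*(q+1):ℕ):ℝ) := by
        rw [reflectSum (fun j => L (evAf j) / (((m-j+1)*(m-j+2):ℕ):ℝ)) m]
        apply Finset.sum_congr rfl
        intro q hq
        obtain ⟨h1, h2⟩ := Finset.mem_Icc.mp hq
        rw [show m-(m+1-q)+1 = q by omega, show m-(m+1-q)+2 = q+1 by omega]
      have hc1 : 0 ≤ 1 / (n : ℝ) + ((n : ℝ) - (m : ℝ) - 1) / ((n : ℝ) * ((m : ℝ) + 1)) * L 2 +
          ∑ j ∈ Icc 1 m, L (evAf j) / (((m-j+1)*(m-j+2):ℕ):ℝ) := by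
        simpa only [evAf] using hcond1
      rw [hstep, hconstEq] at hc1
      linarith [hc1]
    have hcondB : 0 ≤ (1 + L 2)/(2*((m:ℝ)+1))
        + ∑ q ∈ Icc 1 m, L (evBf (m+1-q)) / ((q*(q+1):ℕ):ℝ) := by
      have hstep : ∑ j ∈ Icc 1 m, L (evBf j) / (((m-j+1)*(m-j+2):ℕ):ℝ)
          = ∑ q ∈ Icc 1 m, L (evBf (m+1-q)) / ((q*(q+1):ℕ):ℝ) := by
        rw [reflectSum (fun j => L (evBf j) / (((m-j+1)*(m-j+2):ℕ):ℝ)) m]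
        apply Finset.sum_congr rfl
        intro q hq
        obtain ⟨h1, h2⟩ := Finset.mem_Icc.mp hq
        rw [show m-(m+1-q)+1 = q by omega, show m-(m+1-q)+2 = q+1 by omega]
      have hc2 : 0 ≤ 1 / (n : ℝ) + ((n : ℝ) - (m : ℝ) - 1) / ((n : ℝ) * ((m : ℝ) + 1)) * L 2 +
          ∑ j ∈ Icc 1 m, L (evBf j) / (((m-j+1)*(m-j+2):ℕ):ℝ) := by
        simpa only [evBf] using hcond2
      rw [hstep, hconstEq] at hc2
      linarith [hc2]
    have hwA : ∀ q q', 1 ≤ q → q ≤ q' → q' ≤ m →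
        L (evAf (m+1-q)) ≤ L (evAf (m+1-q')) := by
      intro q q' h1 h2 h3
      rcases eq_or_lt_of_le h2 with he | hlt2
      · subst he; exact le_refl _
      · obtain ⟨ha1, ha2⟩ := evAf_between (show 1 ≤ m+1-q by omega)
        obtain ⟨hb1, hb2⟩ := evAf_between (show 1 ≤ m+1-q' by omega)
        exact Lanti (evAf (m+1-q')) (evAf (m+1-q)) (by omega) (by omega) (by omega)
    have hwB : ∀ q q', 1 ≤ q → q ≤ q' → q' ≤ m →
        L (evBf (m+1-q)) ≤ L (evBf (m+1-q')) := by
      intro q q' h1 h2 h3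
      rcases eq_or_lt_of_le h2 with he | hlt2
      · subst he; exact le_refl _
      · obtain ⟨ha1, ha2⟩ := evBf_between (m+1-q)
        obtain ⟨hb1, hb2⟩ := evBf_between (m+1-q')
        exact Lanti (evBf (m+1-q')) (evBf (m+1-q)) (by omega) (by omega) (by omega)
    have hwlA : ∀ q, 1 ≤ q → q ≤ m → L (evAf (m+1-q)) ≤ L 2 := by
      intro q h1 h2
      obtain ⟨ha1, ha2⟩ := evAf_between (show 1 ≤ m+1-q by omega)
      exact Lanti 2 (evAf (m+1-q)) (le_refl 2) (by omega) (by omega)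
    have hwlB : ∀ q, 1 ≤ q → q ≤ m → L (evBf (m+1-q)) ≤ L 2 := by
      intro q h1 h2
      obtain ⟨ha1, ha2⟩ := evBf_between (m+1-q)
      exact Lanti 2 (evBf (m+1-q)) (le_refl 2) (by omega) (by omega)
    intro i i'
    rw [hDfull i i', levf0, levf1]
    rcases divcase i.val (hiv i) with ⟨hlt, hg⟩ | ⟨hlt, hg⟩ <;>
      rcases divcase i'.val (hiv i') with ⟨hlt', hg'⟩ | ⟨hlt', hg'⟩
    · -- both first half: weights evAf
      rw [if_pos (show (i:Fin n).val/(m+1) = (i':Fin n).val/(m+1) by rw [hg, hg']),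
        if_pos hlt, if_pos hlt']
      have hsum : ∑ q ∈ Icc 1 m, levf m L (2*q + i.val/(m+1))
            * (vv q (i.val%(m+1)) * vv q (i'.val%(m+1))) / ((q*(q+1):ℕ):ℝ)
          = ∑ q ∈ Icc 1 m, L (evAf (m+1-q))
            * (vv q (i.val%(m+1)) * vv q (i'.val%(m+1))) / ((q*(q+1):ℕ):ℝ) :=
        Finset.sum_congr rfl fun q hq => by
          rw [hg, add_zero, levf_even m L (Finset.mem_Icc.mp hq).1]
      rw [hsum]
      have hexp : (1 + L 2)/(2*((m:ℝ)+1))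
          = 1/((2*(m+1):ℕ):ℝ) + 1*1*(L 2)/((2*(m+1):ℕ):ℝ) := by rw [hcast2]; ring
      rcases le_total (i.val%(m+1)) (i'.val%(m+1)) with hab | hab
      · have hh : 0 ≤ (1 + L 2)/(2*((m:ℝ)+1)) + ∑ q ∈ Icc 1 m, L (evAf (m+1-q))
            * (vv q (i.val%(m+1)) * vv q (i'.val%(m+1))) / ((q*(q+1):ℕ):ℝ) :=
          helper m (L 2) (fun q => L (evAf (m+1-q))) hwA hwlA hub hcondA _ _ hab (modle i'.val)
        rw [hexp] at hh
        linarith [hh]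
      · have hh : 0 ≤ (1 + L 2)/(2*((m:ℝ)+1)) + ∑ q ∈ Icc 1 m, L (evAf (m+1-q))
            * (vv q (i'.val%(m+1)) * vv q (i.val%(m+1))) / ((q*(q+1):ℕ):ℝ) :=
          helper m (L 2) (fun q => L (evAf (m+1-q))) hwA hwlA hub hcondA _ _ hab (modle i.val)
        have hcom : ∑ q ∈ Icc 1 m, L (evAf (m+1-q))
              * (vv q (i.val%(m+1)) * vv q (i'.val%(m+1))) / ((q*(q+1):ℕ):ℝ)
            = ∑ q ∈ Icc 1 m, L (evAf (m+1-q))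
              * (vv q (i'.val%(m+1)) * vv q (i.val%(m+1))) / ((q*(q+1):ℕ):ℝ) :=
          Finset.sum_congr rfl fun q _ => by ring
        rw [← hcom, hexp] at hh
        linarith [hh]
    · -- first/second half
      rw [if_neg (show ¬ (i:Fin n).val/(m+1) = (i':Fin n).val/(m+1) by rw [hg, hg']; omega),
        if_pos hlt, if_neg hlt']
      have h2 : 0 ≤ (1 - L 2)/(2*((m:ℝ)+1)) := div_nonneg (by linarith) (by positivity)
      have heq : 1/((2*(m+1):ℕ):ℝ) + 1*(-1)*(L 2)/((2*(m+1):ℕ):ℝ) + 0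
          = (1 - L 2)/(2*((m:ℝ)+1)) := by rw [hcast2]; ring
      linarith [h2, heq]
    · rw [if_neg (show ¬ (i:Fin n).val/(m+1) = (i':Fin n).val/(m+1) by rw [hg, hg']; omega),
        if_neg hlt, if_pos hlt']
      have h2 : 0 ≤ (1 - L 2)/(2*((m:ℝ)+1)) := div_nonneg (by linarith) (by positivity)
      have heq : 1/((2*(m+1):ℕ):ℝ) + (-1)*1*(L 2)/((2*(m+1):ℕ):ℝ) + 0
          = (1 - L 2)/(2*((m:ℝ)+1)) := by rw [hcast2]; ring
      linarith [h2, heq]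
    · -- both second half: weights evBf
      rw [if_pos (show (i:Fin n).val/(m+1) = (i':Fin n).val/(m+1) by rw [hg, hg']),
        if_neg hlt, if_neg hlt']
      have hsum : ∑ q ∈ Icc 1 m, levf m L (2*q + i.val/(m+1))
            * (vv q (i.val%(m+1)) * vv q (i'.val%(m+1))) / ((q*(q+1):ℕ):ℝ)
          = ∑ q ∈ Icc 1 m, L (evBf (m+1-q))
            * (vv q (i.val%(m+1)) * vv q (i'.val%(m+1))) / ((q*(q+1):ℕ):ℝ) :=
        Finset.sum_congr rfl fun q hq => by
          rw [hg, levf_odd m L (Finset.mem_Icc.mp hq).1]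
      rw [hsum]
      have hexp : (1 + L 2)/(2*((m:ℝ)+1))
          = 1/((2*(m+1):ℕ):ℝ) + (-1)*(-1)*(L 2)/((2*(m+1):ℕ):ℝ) := by rw [hcast2]; ring
      rcases le_total (i.val%(m+1)) (i'.val%(m+1)) with hab | hab
      · have hh : 0 ≤ (1 + L 2)/(2*((m:ℝ)+1)) + ∑ q ∈ Icc 1 m, L (evBf (m+1-q))
            * (vv q (i.val%(m+1)) * vv q (i'.val%(m+1))) / ((q*(q+1):ℕ):ℝ) :=
          helper m (L 2) (fun q => L (evBf (m+1-q))) hwB hwlB hub hcondB _ _ hab (modle i'.val)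
        rw [hexp] at hh
        linarith [hh]
      · have hh : 0 ≤ (1 + L 2)/(2*((m:ℝ)+1)) + ∑ q ∈ Icc 1 m, L (evBf (m+1-q))
            * (vv q (i'.val%(m+1)) * vv q (i.val%(m+1))) / ((q*(q+1):ℕ):ℝ) :=
          helper m (L 2) (fun q => L (evBf (m+1-q))) hwB hwlB hub hcondB _ _ hab (modle i.val)
        have hcom : ∑ q ∈ Icc 1 m, L (evBf (m+1-q))
              * (vv q (i.val%(m+1)) * vv q (i'.val%(m+1))) / ((q*(q+1):ℕ):ℝ)
            = ∑ q ∈ Icc 1 m, L (evBf (m+1-q))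
              * (vv q (i'.val%(m+1)) * vv q (i.val%(m+1))) / ((q*(q+1):ℕ):ℝ) :=
          Finset.sum_congr rfl fun q _ => by ring
        rw [← hcom, hexp] at hh
        linarith [hh]
  · -- column sums
    intro j
    have hji : ∀ i : Fin n, (Pm * Dg * Rm) i j = (Pm * Dg * Rm) j i := by
      intro i
      calc (Pm * Dg * Rm) i j = (Pm * Dg * Rm)ᵀ j i := (Matrix.transpose_apply _ _ _).symm
        _ = (Pm * Dg * Rm) j i := by rw [hsymm]
    rw [Finset.sum_congr rfl (fun i _ => hji i)]
    exact hrowsum j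
  · -- charpoly
    rw [charpoly_conj Pm Dg Rm hPR, hDg, charpoly_diag,
      Fin.prod_univ_eq_prod_range (fun t => X - C (levf m L t)) n, hp, pairProd,
      Finset.prod_range_succ',
      rangeIccProd (fun q => (X - C (levf m L (2*q))) * (X - C (levf m L (2*q+1)))) m]
    have hpair0 : (X - C (levf m L (2*0))) * (X - C (levf m L (2*0+1)))
        = (X - C 1) * (X - C (L 2)) := by
      norm_num [levf0, levf1]
    have hpairs : ∏ q ∈ Icc 1 m, (X - C (levf m L (2*q))) * (X - C (levf m L (2*q+1)))
        = ∏ t ∈ Icc 3 (2*m+2), (X - C (L t)) := by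
      have e1 : ∏ q ∈ Icc 1 m, (X - C (levf m L (2*q))) * (X - C (levf m L (2*q+1)))
          = ∏ q ∈ Icc 1 m, (fun j => (X - C (L (evAf j))) * (X - C (L (evBf j)))) (m+1-q) :=
        Finset.prod_congr rfl fun q hq => by
          obtain ⟨h1, h2⟩ := Finset.mem_Icc.mp hq
          rw [levf_even m L h1, levf_odd m L h1]
      rw [e1, ← reflectProd (fun j => (X - C (L (evAf j))) * (X - C (L (evBf j)))) m,
        ← prodPairIcc (fun t => X - C (L t)) m]
      apply Finset.prod_congr rfl
      intro j hj
      by_cases hodd : Odd j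
      · rw [evAf_odd hodd, evBf_odd hodd]
      · rw [evAf_even hodd, evBf_even hodd, mul_comm]
    rw [hpair0, hpairs]
    have hr : ∏ j ∈ Icc 2 (2*(m+1)), (X - C (L j))
        = (X - C (L 2)) * ∏ t ∈ Icc 3 (2*m+2), (X - C (L t)) := by
      rw [show Icc 2 (2*(m+1)) = Ico 2 (2*(m+1)+1) from (Finset.Ico_add_one_right_eq_Icc 2 (2*(m+1))).symm,
        Finset.prod_eq_prod_Ico_succ_bot (by omega) (fun j => X - C (L j)),
        show (2:ℕ)+1 = 3 from rfl,
        show Ico 3 (2*(m+1)+1) = Icc 3 (2*(m+1)) from Finset.Ico_add_one_right_eq_Icc 3 (2*(m+1)),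
        show 2*(m+1) = 2*m+2 by omega]
    rw [hr]
    ring
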